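/- Fix n ≥ 1, a > 0, α ≥ 0, and c > 0 (standing for V''(a)), and real numbers F^{(p+1)}(a) coming from an even polynomial F of degree 2n with F''(0) = α, F^{(3)}(0) = 0. Then the linear system Σ_{p=1}^{2n−1} ((−1)^p/p!) F^{(p+1)}(a) τ_p + ((α + c)/(k a^{k−1})) τ_k = V^{(3)}(a)/(4(α + c)) − (k−1)/(4a), for 1 ≤ k ≤ 2n−1, has the unique solution τ_k = k a^{k−1} (a V^{(3)}(a) − (k−1)c)/(4 a c (α + c)). -/

import Mathlib

open Polynomial Finset

lemma taylor_at_zero (Q : Polynomial ℝ) (a : ℝ) (m : ℕ)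
    (hQ : ∀ i, m ≤ i → Q.coeff i = 0) :
    Q.eval 0 = ∑ i ∈ Finset.range m,
      (derivative^[i] Q).eval a * (-a) ^ i / (Nat.factorial i : ℝ) := by
  by_cases h0 : Q = 0
  · simp [h0]
  have hdeg : Q.natDegree < m := by
    by_contra h
    exact (Polynomial.leadingCoeff_ne_zero.mpr h0) (hQ _ (le_of_not_gt h))
  have h1 : Q.eval 0 = (Polynomial.taylor a Q).eval (-a) := by
    rw [Polynomial.taylor_eval]; norm_num
  rw [h1, Polynomial.eval_eq_sum_range' (by rwa [Polynomial.natDegree_taylor]) (-a)]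
  refine Finset.sum_congr rfl fun i _ => ?_
  rw [Polynomial.taylor_coeff]
  have h2 : (Nat.factorial i : ℝ) * (Polynomial.hasseDeriv i Q).eval a
      = (derivative^[i] Q).eval a := by
    have := congrFun (Polynomial.factorial_smul_hasseDeriv (R := ℝ) i) Q
    calc (Nat.factorial i : ℝ) * (Polynomial.hasseDeriv i Q).eval a
        = ((Nat.factorial i • Polynomial.hasseDeriv i Q : Polynomial ℝ)).eval a := by
          simp [Polynomial.eval_smul, nsmul_eq_mul]
      _ = _ := by rw [show (Nat.factorial i • Polynomial.hasseDeriv i Q : Polynomial ℝ) = derivative^[i] Q from this]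
  have hfac : (Nat.factorial i : ℝ) ≠ 0 := Nat.cast_ne_zero.mpr (Nat.factorial_ne_zero i)
  field_simp [← h2]
  rw [← h2]
  ring

lemma coeff_vanish (F : Polynomial ℝ) (n k m : ℕ) (hdeg : F.natDegree = 2 * n)
    (h : 2 * n < m + k) : (derivative^[k] F).coeff m = 0 := by
  rw [Polynomial.coeff_iterate_derivative,
    Polynomial.coeff_eq_zero_of_natDegree_lt (by omega), smul_zero]

lemma sumA (n : ℕ) (hn : 1 ≤ n) (a α : ℝ) (F : Polynomial ℝ)
    (hdeg : F.natDegree = 2 * n) (hF2 : (derivative^[2] F).eval 0 = α) :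
    ∑ p ∈ Finset.range (2 * n - 1),
      ((-1 : ℝ) ^ (p + 1) / (Nat.factorial (p + 1) : ℝ)) * (derivative^[p + 2] F).eval a
        * (((p : ℝ) + 1) * a ^ p) = -α := by
  have key := taylor_at_zero (derivative^[2] F) a (2 * n - 1)
    (fun i hi => coeff_vanish F n 2 i hdeg (by omega))
  rw [hF2] at key
  rw [show -α = -(∑ i ∈ Finset.range (2 * n - 1),
      (derivative^[i] (derivative^[2] F)).eval a * (-a) ^ i / (Nat.factorial i : ℝ)) from by
    rw [← key], ← Finset.sum_neg_distrib]
  refine Finset.sum_congr rfl fun p _ => ?_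
  rw [show derivative^[p + 2] F = derivative^[p] (derivative^[2] F) from
    Function.iterate_add_apply _ p 2 F]
  have hfac : (Nat.factorial p : ℝ) ≠ 0 := Nat.cast_ne_zero.mpr (Nat.factorial_ne_zero p)
  rw [Nat.factorial_succ]
  push_cast
  rw [show ((-a) : ℝ) ^ p = (-1) ^ p * a ^ p by rw [neg_pow]]
  field_simp
  ring

lemma sumM (n : ℕ) (hn : 1 ≤ n) (a : ℝ) (F : Polynomial ℝ)
    (hdeg : F.natDegree = 2 * n) (hF3 : (derivative^[3] F).eval 0 = 0) :
    ∑ p ∈ Finset.range (2 * n - 1),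
      ((-1 : ℝ) ^ (p + 1) / (Nat.factorial (p + 1) : ℝ)) * (derivative^[p + 2] F).eval a
        * (((p : ℝ) + 1) * (p : ℝ) * a ^ p) = 0 := by
  have hN : 2 * n - 1 = (2 * n - 2) + 1 := by omega
  rw [hN, Finset.sum_range_succ']
  have key := taylor_at_zero (derivative^[3] F) a (2 * n - 2)
    (fun i hi => coeff_vanish F n 3 i hdeg (by omega))
  rw [hF3] at key
  have h0 : ((-1 : ℝ) ^ (0 + 1) / (Nat.factorial (0 + 1) : ℝ)) * (derivative^[0 + 2] F).eval a
      * ((((0:ℕ) : ℝ) + 1) * ((0:ℕ) : ℝ) * a ^ (0:ℕ)) = 0 := by norm_num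
  rw [h0, add_zero]
  have : ∀ q ∈ Finset.range (2 * n - 2),
      ((-1 : ℝ) ^ (q + 1 + 1) / (Nat.factorial (q + 1 + 1) : ℝ)) * (derivative^[q + 1 + 2] F).eval a
        * ((((q+1:ℕ) : ℝ) + 1) * ((q+1:ℕ) : ℝ) * a ^ (q+1)) =
      a * ((derivative^[q] (derivative^[3] F)).eval a * (-a) ^ q / (Nat.factorial q : ℝ)) := by
    intro q _
    rw [show derivative^[q + 1 + 2] F = derivative^[q] (derivative^[3] F) from by
      rw [show q + 1 + 2 = q + 3 from rfl]; exact Function.iterate_add_apply _ q 3 F]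
    have hfac : (Nat.factorial q : ℝ) ≠ 0 := Nat.cast_ne_zero.mpr (Nat.factorial_ne_zero q)
    rw [show q + 1 + 1 = q + 2 from rfl, Nat.factorial_succ, Nat.factorial_succ,
      show ((-a) : ℝ) ^ q = (-1) ^ q * a ^ q by rw [neg_pow]]
    push_cast
    field_simp
    ring
  rw [Finset.sum_congr rfl this, ← Finset.mul_sum, ← key, mul_zero]

lemma sumMaster (n : ℕ) (hn : 1 ≤ n) (a α : ℝ) (F : Polynomial ℝ)
    (hdeg : F.natDegree = 2 * n) (hF2 : (derivative^[2] F).eval 0 = α)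
    (hF3 : (derivative^[3] F).eval 0 = 0) (u v : ℝ) :
    ∑ p ∈ Finset.range (2 * n - 1),
      ((-1 : ℝ) ^ (p + 1) / (Nat.factorial (p + 1) : ℝ)) * (derivative^[p + 2] F).eval a
        * (((p : ℝ) + 1) * a ^ p * (u - (p : ℝ) * v)) = -α * u := by
  have expand : ∀ p ∈ Finset.range (2 * n - 1),
      ((-1 : ℝ) ^ (p + 1) / (Nat.factorial (p + 1) : ℝ)) * (derivative^[p + 2] F).eval a
        * (((p : ℝ) + 1) * a ^ p * (u - (p : ℝ) * v))
      = (((-1 : ℝ) ^ (p + 1) / (Nat.factorial (p + 1) : ℝ)) * (derivative^[p + 2] F).eval a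
          * (((p : ℝ) + 1) * a ^ p)) * u
        - (((-1 : ℝ) ^ (p + 1) / (Nat.factorial (p + 1) : ℝ)) * (derivative^[p + 2] F).eval a
          * (((p : ℝ) + 1) * (p : ℝ) * a ^ p)) * v := by
    intro p _; ring
  rw [Finset.sum_congr rfl expand, Finset.sum_sub_distrib, ← Finset.sum_mul, ← Finset.sum_mul,
    sumA n hn a α F hdeg hF2, sumM n hn a F hdeg hF3]
  ring

theorem cramer_system_unique_solution (n : ℕ) (hn : 1 ≤ n)
    (a α c V3 : ℝ) (ha : 0 < a) (hα : 0 ≤ α) (hc : 0 < c)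
    (F : Polynomial ℝ) (hdeg : F.natDegree = 2 * n)
    (heven : ∀ x : ℝ, F.eval (-x) = F.eval x)
    (hF2 : (derivative^[2] F).eval 0 = α)
    (hF3 : (derivative^[3] F).eval 0 = 0) :
    ∀ τ : Fin (2 * n - 1) → ℝ,
      (∀ k : Fin (2 * n - 1),
        (∑ p : Fin (2 * n - 1),
            ((-1 : ℝ) ^ ((p : ℕ) + 1) / (Nat.factorial ((p : ℕ) + 1) : ℝ)) *
              (derivative^[(p : ℕ) + 2] F).eval a * τ p)
          + ((α + c) / ((((k : ℕ) + 1 : ℕ) : ℝ) * a ^ (k : ℕ))) * τ k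
          = V3 / (4 * (α + c)) - ((k : ℕ) : ℝ) / (4 * a))
      ↔ τ = fun k : Fin (2 * n - 1) =>
          (((k : ℕ) + 1 : ℕ) : ℝ) * a ^ (k : ℕ) *
            (a * V3 - ((k : ℕ) : ℝ) * c) / (4 * a * c * (α + c)) := by
  intro τ
  have hac : (0:ℝ) < α + c := by linarith
  have hac' : α + c ≠ 0 := ne_of_gt hac
  have ha' : a ≠ 0 := ne_of_gt ha
  have hc' : c ≠ 0 := ne_of_gt hc
  constructor
  · intro hτ
    obtain ⟨S, hS_def⟩ : ∃ S : ℝ, S = ∑ p : Fin (2 * n - 1),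
        ((-1 : ℝ) ^ ((p : ℕ) + 1) / (Nat.factorial ((p : ℕ) + 1) : ℝ)) *
          (derivative^[(p : ℕ) + 2] F).eval a * τ p := ⟨_, rfl⟩
    rw [← hS_def] at hτ
    have hτk : ∀ k : Fin (2 * n - 1), τ k =
        ((V3 / (4 * (α + c)) - ((k : ℕ) : ℝ) / (4 * a) - S) *
          ((((k : ℕ) : ℝ) + 1) * a ^ (k : ℕ))) / (α + c) := by
      intro k
      have hD : ((((k : ℕ) : ℝ) + 1) * a ^ (k : ℕ)) ≠ 0 := by positivity
      have e := hτ k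
      push_cast at e
      have hD' : (α + c) / ((((k : ℕ) : ℝ) + 1) * a ^ (k : ℕ)) * τ k
          = V3 / (4 * (α + c)) - ((k : ℕ) : ℝ) / (4 * a) - S := by linarith
      rw [eq_div_iff hac', ← hD']
      field_simp
    have key : S = (1 / (α + c)) * (-α * (V3 / (4 * (α + c)) - S)) := by
      calc S = ∑ p : Fin (2 * n - 1),
            ((-1 : ℝ) ^ ((p : ℕ) + 1) / (Nat.factorial ((p : ℕ) + 1) : ℝ)) *
              (derivative^[(p : ℕ) + 2] F).eval a * τ p := hS_def
        _ = ∑ p : Fin (2 * n - 1), (1 / (α + c)) *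
            (((-1 : ℝ) ^ ((p : ℕ) + 1) / (Nat.factorial ((p : ℕ) + 1) : ℝ)) *
              (derivative^[(p : ℕ) + 2] F).eval a *
              ((((p : ℕ) : ℝ) + 1) * a ^ (p : ℕ) *
                ((V3 / (4 * (α + c)) - S) - ((p : ℕ) : ℝ) * (1 / (4 * a))))) := by
            refine Finset.sum_congr rfl fun p _ => ?_
            rw [hτk p]
            have hfac : ((Nat.factorial ((p : ℕ) + 1)) : ℝ) ≠ 0 :=
              Nat.cast_ne_zero.mpr (Nat.factorial_ne_zero _)
            push_cast at hfac ⊢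
            field_simp
            ring
        _ = (1 / (α + c)) * ∑ p ∈ Finset.range (2 * n - 1),
            (((-1 : ℝ) ^ (p + 1) / (Nat.factorial (p + 1) : ℝ)) *
              (derivative^[p + 2] F).eval a *
              (((p : ℝ) + 1) * a ^ p *
                ((V3 / (4 * (α + c)) - S) - (p : ℝ) * (1 / (4 * a))))) := by
            rw [← Finset.mul_sum, Fin.sum_univ_eq_sum_range (fun p : ℕ =>
              ((-1 : ℝ) ^ (p + 1) / (Nat.factorial (p + 1) : ℝ)) *
              (derivative^[p + 2] F).eval a *
              (((p : ℝ) + 1) * a ^ p *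
                ((V3 / (4 * (α + c)) - S) - (p : ℝ) * (1 / (4 * a)))))]
        _ = (1 / (α + c)) * (-α * (V3 / (4 * (α + c)) - S)) := by
            rw [sumMaster n hn a α F hdeg hF2 hF3]
    have hSval : S = -α * V3 / (4 * c * (α + c)) := by
      field_simp at key ⊢
      linear_combination key
    funext k
    rw [hτk k, hSval]
    push_cast
    field_simp
    ring
  · intro hτ
    subst hτ
    intro k
    have hD : ((((k : ℕ) : ℝ) + 1) * a ^ (k : ℕ)) ≠ 0 := by positivity
    have hsum : (∑ p : Fin (2 * n - 1),
        ((-1 : ℝ) ^ ((p : ℕ) + 1) / (Nat.factorial ((p : ℕ) + 1) : ℝ)) *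
          (derivative^[(p : ℕ) + 2] F).eval a *
          ((((p : ℕ) + 1 : ℕ) : ℝ) * a ^ (p : ℕ) *
            (a * V3 - ((p : ℕ) : ℝ) * c) / (4 * a * c * (α + c))))
        = -α * (V3 / (4 * c * (α + c))) := by
      calc (∑ p : Fin (2 * n - 1),
          ((-1 : ℝ) ^ ((p : ℕ) + 1) / (Nat.factorial ((p : ℕ) + 1) : ℝ)) *
            (derivative^[(p : ℕ) + 2] F).eval a *
            ((((p : ℕ) + 1 : ℕ) : ℝ) * a ^ (p : ℕ) *
              (a * V3 - ((p : ℕ) : ℝ) * c) / (4 * a * c * (α + c))))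
          = ∑ p : Fin (2 * n - 1),
            ((-1 : ℝ) ^ ((p : ℕ) + 1) / (Nat.factorial ((p : ℕ) + 1) : ℝ)) *
              (derivative^[(p : ℕ) + 2] F).eval a *
              ((((p : ℕ) : ℝ) + 1) * a ^ (p : ℕ) *
                ((V3 / (4 * c * (α + c))) - ((p : ℕ) : ℝ) * (1 / (4 * a * (α + c))))) := by
            refine Finset.sum_congr rfl fun p _ => ?_
            push_cast
            field_simp
        _ = ∑ p ∈ Finset.range (2 * n - 1),
            ((-1 : ℝ) ^ (p + 1) / (Nat.factorial (p + 1) : ℝ)) *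
              (derivative^[p + 2] F).eval a *
              (((p : ℝ) + 1) * a ^ p *
                ((V3 / (4 * c * (α + c))) - (p : ℝ) * (1 / (4 * a * (α + c))))) := by
            rw [Fin.sum_univ_eq_sum_range (fun p : ℕ =>
              ((-1 : ℝ) ^ (p + 1) / (Nat.factorial (p + 1) : ℝ)) *
              (derivative^[p + 2] F).eval a *
              (((p : ℝ) + 1) * a ^ p *
                ((V3 / (4 * c * (α + c))) - (p : ℝ) * (1 / (4 * a * (α + c))))))]
        _ = -α * (V3 / (4 * c * (α + c))) := by
            rw [sumMaster n hn a α F hdeg hF2 hF3]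
    rw [hsum]
    push_cast
    field_simp
    ring
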